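/- Let n and d be positive integers with d ≥ n, let X ∈ ℝ^n, let Y be an n × d real matrix such that Y Yᵀ is invertible, let v = (1, −Yᵀ (Y Yᵀ)⁻¹ X) ∈ ℝ^{d+1} and w* = e_1 + v / ‖v‖². Then: (i) ⟨w*, e_1⟩ = 1 + 1/‖v‖², so an attacker querying the trained model at e_1 recovers ‖v‖²; (ii) for every index i, querying the model at the corrupted input z̃_i = (0, y_i) (where y_i is the i-th row of Y) yields ⟨w*, z̃_i⟩ = −x_i / ‖v‖²; consequently x_i = −⟨w*, z̃_i⟩ / ( ⟨w*, e_1⟩ − 1 ), i.e., the attacker can exactly reconstruct x_i from the model w* and the partial sample y_i. -/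

import Mathlib

open scoped BigOperators
open Matrix

/-- Let `d ≥ n`, `Y Yᵀ` invertible, `v = (1, −Yᵀ (Y Yᵀ)⁻¹ X)`
and `w* = e₁ + v / ‖v‖²`. Then (i) `⟨w*, e₁⟩ = 1 + 1/‖v‖²`, so querying the
trained model at `e₁` recovers `‖v‖²`; (ii) for every `i`, querying at the
corrupted input `z̃ᵢ = (0, yᵢ)` yields `⟨w*, z̃ᵢ⟩ = −xᵢ/‖v‖²`; consequently
`xᵢ = −⟨w*, z̃ᵢ⟩ / (⟨w*, e₁⟩ − 1)`: the attacker exactly reconstructs `xᵢ`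
from the model `w*` and the partial sample `yᵢ`. -/
theorem attacker_reconstructs_private_component
    {n d : ℕ} (hn : 0 < n) (hd : 0 < d) (hdn : n ≤ d)
    (X : Fin n → ℝ) (Y : Matrix (Fin n) (Fin d) ℝ)
    (hY : IsUnit (Y * Yᵀ).det)
    (v : Fin (d + 1) → ℝ)
    (hv : v = Fin.cons 1 (-((Yᵀ * (Y * Yᵀ)⁻¹).mulVec X)))
    (wstar : Fin (d + 1) → ℝ)
    (hw : wstar = Pi.single 0 1 + (∑ j, v j ^ 2)⁻¹ • v) :
    dotProduct wstar (Pi.single 0 1) = 1 + (∑ j, v j ^ 2)⁻¹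
    ∧ ∀ i : Fin n,
        dotProduct wstar (Fin.cons 0 (Y i)) = -(X i) / (∑ j, v j ^ 2)
        ∧ X i = -(dotProduct wstar (Fin.cons 0 (Y i)))
            / (dotProduct wstar (Pi.single 0 1) - 1) := by
  set S : ℝ := ∑ j, v j ^ 2 with hS
  have hv0 : v 0 = 1 := by rw [hv]; simp
  have hS1 : (1 : ℝ) ≤ S := by
    calc (1 : ℝ) = v 0 ^ 2 := by rw [hv0]; ring
    _ ≤ S := Finset.single_le_sum (fun j _ => sq_nonneg (v j)) (Finset.mem_univ 0)
  have hSpos : 0 < S := lt_of_lt_of_le one_pos hS1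
  have hSne : S ≠ 0 := ne_of_gt hSpos
  have h1 : dotProduct wstar (Pi.single 0 1) = 1 + S⁻¹ := by
    rw [dotProduct_single, mul_one, hw]
    simp [hv0]
  have h2 : ∀ i : Fin n, dotProduct wstar (Fin.cons 0 (Y i)) = -(X i) / S := by
    intro i
    have key : dotProduct v (Fin.cons 0 (Y i)) = -(X i) := by
      rw [hv]
      have : dotProduct (Fin.cons 1 (-((Yᵀ * (Y * Yᵀ)⁻¹).mulVec X)))
          (Fin.cons (0:ℝ) (Y i))
          = ∑ j : Fin d, (-((Yᵀ * (Y * Yᵀ)⁻¹).mulVec X)) j * Y i j := by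
        rw [dotProduct, Fin.sum_univ_succ]
        simp
      rw [this]
      have : ∑ j : Fin d, (-((Yᵀ * (Y * Yᵀ)⁻¹).mulVec X)) j * Y i j
          = -((Y.mulVec ((Yᵀ * (Y * Yᵀ)⁻¹).mulVec X)) i) := by
        simp [Matrix.mulVec, dotProduct, mul_comm, Finset.sum_neg_distrib]
      rw [this, Matrix.mulVec_mulVec, ← Matrix.mul_assoc,
        Matrix.mul_nonsing_inv _ hY, Matrix.one_mulVec]
    rw [hw, add_dotProduct, smul_dotProduct, single_dotProduct, key]
    simp [div_eq_inv_mul]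
  refine ⟨h1, fun i => ⟨h2 i, ?_⟩⟩
  rw [h1, h2 i]
  field_simp
  ring
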